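/- arXiv:2007.03917 — 6 statements merged into one kernel-verified Lean document; each statement's English description precedes it below -/
import Mathlib

section
/- Let u ≥ 3 and v ≥ 2 be coprime integers, k = −3 + u/v, and let λ ∈ S_{u,v}. With j = j^tw(λ) and Δ = Δ^tw(λ), one has the factorisation h_k^n(j, Δ) = n(n − λ₁ − 1)(n + λ₂ + 1 − u/v) for all n. Consequently, there exists an integer n ≥ 1 with h_k^n(j, Δ) = 0 if and only if λ^F_1 = 0, and in that case the minimal such n equals λ^I_1 + 1. -/
namespace BPW

/-- A triple of natural numbers `(a₀, a₁, a₂)` (the Dynkin labels of a dominant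
integral `sl₃` weight). -/
abbrev Triple : Type := ℕ × ℕ × ℕ

/-- A weight `λ = (λ^I, λ^F)` consisting of an integral part and a fractional part. -/
abbrev Wt : Type := Triple × Triple

/-- The sum `a₀ + a₁ + a₂` of the entries of a triple. -/
def sumT (a : Triple) : ℕ := a.1 + a.2.1 + a.2.2

/-- `λ = (λ^I, λ^F)` is a *surviving weight* if `λ^I ∈ P^{u−3}`, `λ^F ∈ P^{v−1}`
and `λ^F₀ ≥ 1`. -/
def Surviving (u v : ℕ) (w : Wt) : Prop :=
  sumT w.1 = u - 3 ∧ sumT w.2 = v - 1 ∧ 1 ≤ w.2.1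

/-- `λ ∈ Γ_{u,v}` iff `λ` is surviving and `λ^F₁ ≥ 1`. -/
def InGamma (u v : ℕ) (w : Wt) : Prop :=
  Surviving u v w ∧ 1 ≤ w.2.2.1

/-- The level `k = −3 + u/v`. -/
def kQ (u v : ℕ) : ℚ := -3 + (u : ℚ) / (v : ℚ)

/-- The Dynkin label `λ₁ = λ^I₁ − (u/v)·λ^F₁`. -/
def dyn1 (u v : ℕ) (w : Wt) : ℚ := (w.1.2.1 : ℚ) - (u : ℚ) / (v : ℚ) * (w.2.2.1 : ℚ)

/-- The Dynkin label `λ₂ = λ^I₂ − (u/v)·λ^F₂`. -/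
def dyn2 (u v : ℕ) (w : Wt) : ℚ := (w.1.2.2 : ℚ) - (u : ℚ) / (v : ℚ) * (w.2.2.2 : ℚ)

/-- The charge `j(λ) = (λ₁ − λ₂)/3`. -/
def jwt (u v : ℕ) (w : Wt) : ℚ := (dyn1 u v w - dyn2 u v w) / 3

/-- The conformal weight
`Δ(λ) = [(λ₁−λ₂)² − 3(λ₁+λ₂)(2(k+1)−λ₁−λ₂)]/(12(k+3))`. -/
def Dwt (u v : ℕ) (w : Wt) : ℚ :=
  ((dyn1 u v w - dyn2 u v w) ^ 2
      - 3 * (dyn1 u v w + dyn2 u v w) * (2 * (kQ u v + 1) - dyn1 u v w - dyn2 u v w))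
    / (12 * (kQ u v + 3))

/-- The twisted charge `j^tw(λ) = (λ₁ − λ₂)/3 + (2k+3)/6`. -/
def jtw (u v : ℕ) (w : Wt) : ℚ := jwt u v w + (2 * kQ u v + 3) / 6

/-- The twisted conformal weight `Δ^tw(λ) = Δ(λ) + (λ₁ − λ₂)/6 + (2k+3)/24`. -/
def Dtw (u v : ℕ) (w : Wt) : ℚ :=
  Dwt u v w + (dyn1 u v w - dyn2 u v w) / 6 + (2 * kQ u v + 3) / 24

/-- `ω(λ) = −(2/27)(λ₁−λ₂+k+3)(2λ₁+λ₂−k)(λ₁+2λ₂−2k−3)`. -/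
def omg (u v : ℕ) (w : Wt) : ℚ :=
  -(2/27) * (dyn1 u v w - dyn2 u v w + kQ u v + 3)
    * (2 * dyn1 u v w + dyn2 u v w - kQ u v)
    * (dyn1 u v w + 2 * dyn2 u v w - 2 * kQ u v - 3)

/-- `f_k(x, y) = 3x² − (k+3)y − (1/8)(k+1)(2k+3)`, over `ℚ`. -/
def fQ (k x y : ℚ) : ℚ := 3 * x ^ 2 - (k + 3) * y - 1/8 * (k + 1) * (2*k + 3)

/-- `h_k^n(j, Δ) = Σ_{m=0}^{n−1} f_k(j−m, Δ)`, over `ℚ`. -/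
def hQ (k : ℚ) (n : ℕ) (j Δ : ℚ) : ℚ := ∑ m ∈ Finset.range n, fQ k (j - m) Δ

/-- with `j = j^tw(λ)` and `Δ = Δ^tw(λ)` for `λ ∈ S_{u,v}`, one has
`h_k^n(j,Δ) = n(n − λ₁ − 1)(n + λ₂ + 1 − u/v)` for all `n`; consequently some `n ≥ 1`
satisfies `h_k^n(j,Δ) = 0` iff `λ^F₁ = 0`, in which case the minimal such `n` is
`λ^I₁ + 1`. -/
theorem h_factorisation (u v : ℕ) (hu : 3 ≤ u) (hv : 2 ≤ v) (hcop : Nat.Coprime u v)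
    (w : Wt) (hw : Surviving u v w) :
    (∀ n : ℕ, hQ (kQ u v) n (jtw u v w) (Dtw u v w)
        = n * ((n : ℚ) - dyn1 u v w - 1) * ((n : ℚ) + dyn2 u v w + 1 - (u : ℚ)/(v : ℚ))) ∧
    ((∃ n : ℕ, 1 ≤ n ∧ hQ (kQ u v) n (jtw u v w) (Dtw u v w) = 0) ↔ w.2.2.1 = 0) ∧
    (w.2.2.1 = 0 →
      IsLeast {n : ℕ | 1 ≤ n ∧ hQ (kQ u v) n (jtw u v w) (Dtw u v w) = 0}
        (w.1.2.1 + 1)) := by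
  obtain ⟨hI, hF, hF0⟩ := hw
  have hv0 : (v:ℚ) ≠ 0 := by
    have : (0:ℚ) < v := by exact_mod_cast Nat.lt_of_lt_of_le (by norm_num) hv
    exact ne_of_gt this
  have hu0 : (u:ℚ) ≠ 0 := by
    have : (0:ℚ) < u := by exact_mod_cast Nat.lt_of_lt_of_le (by norm_num) hu
    exact ne_of_gt this
  -- the factorisation
  have hfact : ∀ n : ℕ, hQ (kQ u v) n (jtw u v w) (Dtw u v w)
      = n * ((n : ℚ) - dyn1 u v w - 1) * ((n : ℚ) + dyn2 u v w + 1 - (u : ℚ)/(v : ℚ)) := by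
    intro n
    induction n with
    | zero => simp [hQ]
    | succ n ih =>
      rw [hQ, Finset.sum_range_succ, ← hQ, ih]
      push_cast
      rw [fQ, jtw, Dtw, jwt, Dwt, kQ, dyn1, dyn2]
      rw [show (-3 + (u:ℚ) / (v:ℚ) + 3) = (u:ℚ) / (v:ℚ) by ring]
      field_simp
      ring
  -- bounds on the fractional part
  have hFs : w.2.1 + w.2.2.1 + w.2.2.2 = v - 1 := hF
  have hb1lt : w.2.2.1 < v := by omega
  have hb2lt : w.2.2.2 + 1 < v := by omega
  have hcop' : IsCoprime (v:ℤ) (u:ℤ) := Nat.isCoprime_iff_coprime.mpr hcop.symm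
  -- key characterisation of the zeros
  have key : ∀ n : ℕ, 1 ≤ n →
      (hQ (kQ u v) n (jtw u v w) (Dtw u v w) = 0 ↔ (w.2.2.1 = 0 ∧ n = w.1.2.1 + 1)) := by
    intro n hn
    rw [hfact n]
    constructor
    · intro h
      have hn0 : (n:ℚ) ≠ 0 := by
        have : (0:ℚ) < n := by exact_mod_cast hn
        exact ne_of_gt this
      rcases mul_eq_zero.mp h with h | h2
      · rcases mul_eq_zero.mp h with h0 | h1
        · exact absurd h0 hn0
        · -- first nontrivial factor
          rw [dyn1] at h1
          have h3 : (u:ℚ) * w.2.2.1 = ((w.1.2.1:ℚ) + 1 - n) * v := by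
            field_simp at h1
            linarith
          have h4 : (u * (w.2.2.1:ℤ) : ℤ) = ((w.1.2.1:ℤ) + 1 - n) * v := by
            exact_mod_cast h3
          have h5 : (v:ℤ) ∣ (u:ℤ) * w.2.2.1 := ⟨(w.1.2.1:ℤ) + 1 - n, by rw [h4]; ring⟩
          have h6 : (v:ℤ) ∣ (w.2.2.1:ℤ) := hcop'.dvd_of_dvd_mul_left h5
          have h7 : v ∣ w.2.2.1 := Int.natCast_dvd_natCast.mp h6
          have hb0 : w.2.2.1 = 0 := Nat.eq_zero_of_dvd_of_lt h7 hb1lt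
          refine ⟨hb0, ?_⟩
          have : (n:ℚ) = (w.1.2.1:ℚ) + 1 := by
            rw [hb0] at h1; push_cast at h1; linarith
          exact_mod_cast this
      · -- last factor cannot vanish
        exfalso
        rw [dyn2] at h2
        have h3 : (u:ℚ) * ((w.2.2.2:ℚ) + 1) = ((n:ℚ) + w.1.2.2 + 1) * v := by
          field_simp at h2
          linarith
        have h4 : ((u:ℤ) * ((w.2.2.2:ℤ) + 1) : ℤ) = ((n:ℤ) + w.1.2.2 + 1) * v := by
          exact_mod_cast h3
        have h5 : (v:ℤ) ∣ (u:ℤ) * ((w.2.2.2:ℤ) + 1) := ⟨(n:ℤ) + w.1.2.2 + 1, by rw [h4]; ring⟩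
        have h6 : (v:ℤ) ∣ ((w.2.2.2:ℤ) + 1) := hcop'.dvd_of_dvd_mul_left h5
        have h7 : v ∣ w.2.2.2 + 1 := by exact_mod_cast h6
        have := Nat.le_of_dvd (by omega) h7
        omega
    · rintro ⟨hb1, hn1⟩
      subst hn1
      rw [dyn1, hb1]
      push_cast
      ring
  refine ⟨hfact, ?_, ?_⟩
  · constructor
    · rintro ⟨n, hn1, hn2⟩
      exact ((key n hn1).mp hn2).1
    · intro hb1
      refine ⟨w.1.2.1 + 1, by omega, ?_⟩
      exact (key _ (by omega)).mpr ⟨hb1, rfl⟩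
  · intro hb1
    constructor
    · exact ⟨by omega, (key _ (by omega)).mpr ⟨hb1, rfl⟩⟩
    · rintro m ⟨hm1, hm2⟩
      have := ((key m hm1).mp hm2).2
      omega

end BPW
end

section
/- Let u, v ≥ 3 be coprime integers and k = −3 + u/v. Define g on pairs by g(λ)^I = (λ^I_2, λ^I_0, λ^I_1) and g(λ)^F = (λ^F_2 + 1, λ^F_0, λ^F_1 − 1). Then: (a) g maps Γ_{u,v} into Γ_{u,v}; (b) g³ is the identity on Γ_{u,v}; (c) g has no fixed points on Γ_{u,v}, so the resulting ℤ/3-action on Γ_{u,v} is free; (d) Δ^tw(g(λ)) = Δ^tw(λ) and ω(g(λ)) = ω(λ) for every λ ∈ Γ_{u,v}; (e) the fibers of the map Γ_{u,v} → ℚ × ℚ, λ ↦ (Δ^tw(λ), ω(λ)), are exactly the orbits of g, so this map is precisely 3-to-1 onto its image. -/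
namespace BPW

/-- The map `g : λ ↦ μ` with `μ^I = (λ^I₂, λ^I₀, λ^I₁)` and
`μ^F = (λ^F₂ + 1, λ^F₀, λ^F₁ − 1)`. -/
def gmap (w : Wt) : Wt :=
  ((w.1.2.2, w.1.1, w.1.2.1), (w.2.2.2 + 1, w.2.1, w.2.2.1 - 1))

/-! ### Auxiliary lemmas -/

lemma ratint (u v : ℕ) (hv : 0 < v) (hcop : Nat.Coprime u v) (P Q : ℤ)
    (h : (P : ℚ) = (u:ℚ)/(v:ℚ) * (Q : ℚ)) : ∃ s : ℤ, Q = s * v ∧ P = s * u := by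
  have hv0 : ((v:ℚ)) ≠ 0 := Nat.cast_ne_zero.mpr (by omega)
  rw [div_mul_eq_mul_div, eq_div_iff hv0] at h
  have hz : P * (v:ℤ) = (u:ℤ) * Q := by exact_mod_cast h
  have hco : IsCoprime (v:ℤ) (u:ℤ) := Int.isCoprime_iff_gcd_eq_one.mpr (by
    simpa [Int.gcd] using hcop.symm)
  have hdvd : (v:ℤ) ∣ (u:ℤ) * Q := ⟨P, by linarith⟩
  have hdQ : (v:ℤ) ∣ Q := hco.dvd_of_dvd_mul_left hdvd
  obtain ⟨s, hs⟩ := hdQ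
  refine ⟨s, by rw [hs]; ring, ?_⟩
  have hvne : (v:ℤ) ≠ 0 := by exact_mod_cast Nat.pos_iff_ne_zero.mp hv
  have hps : P * (v:ℤ) = (s * u) * v := by rw [hz, hs]; ring
  exact mul_right_cancel₀ hvne hps

lemma three_dvd (u v : ℕ) (hcop : Nat.Coprime u v) (s r c1 c2 : ℤ)
    (h1 : (r - s) * (v:ℤ) = 3 * c1) (h2 : (r - s) * (u:ℤ) = 3 * c2) :
    ∃ c : ℤ, r = s + 3 * c := by
  have p3 : Prime (3:ℤ) := Int.prime_three
  have d1 : (3:ℤ) ∣ (r - s) * v := ⟨c1, h1⟩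
  have d2 : (3:ℤ) ∣ (r - s) * u := ⟨c2, h2⟩
  rcases (p3.dvd_mul).mp d1 with h | h
  · obtain ⟨c, hc⟩ := h; exact ⟨c, by omega⟩
  · rcases (p3.dvd_mul).mp d2 with h' | h'
    · obtain ⟨c, hc⟩ := h'; exact ⟨c, by omega⟩
    · exfalso
      have hv3 : (3:ℕ) ∣ v := by exact_mod_cast h
      have hu3 : (3:ℕ) ∣ u := by exact_mod_cast h'
      have hg := Nat.dvd_gcd hu3 hv3
      rw [hcop] at hg
      omega

lemma mulv_pos_ge {v c X : ℤ} (hv : 0 < v) (hX : X = c * v) (h1 : 0 < X) : v ≤ X := by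
  have hc : 1 ≤ c := by
    rcases le_or_gt c 0 with h | h
    · exfalso
      have : c * v ≤ 0 := mul_nonpos_iff.mpr (Or.inr ⟨h, hv.le⟩)
      omega
    · omega
  calc v = 1 * v := (one_mul v).symm
    _ ≤ c * v := mul_le_mul_of_nonneg_right hc hv.le
    _ = X := hX.symm

lemma mulv_neg_le {v c X : ℤ} (hv : 0 < v) (hX : X = c * v) (h1 : X < 0) : X ≤ -v := by
  have h := mulv_pos_ge (v := v) (c := -c) (X := -X) hv (by rw [hX]; ring) (by omega)
  omega

lemma mulv_zero {v c X : ℤ} (hv : 0 < v) (hX : X = c * v) (h1 : -v < X) (h2 : X < v) :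
    X = 0 := by
  rcases lt_trichotomy X 0 with h | h | h
  · have := mulv_neg_le hv hX h; omega
  · exact h
  · have := mulv_pos_ge hv hX h; omega

lemma mulv_one {v c X : ℤ} (hv : 0 < v) (hX : X = c * v) (h1 : 0 < X) (h2 : X < 2*v) :
    X = v := by
  have hc1 : 1 ≤ c := by
    rcases le_or_gt c 0 with h | h
    · exfalso; have : c * v ≤ 0 := mul_nonpos_iff.mpr (Or.inr ⟨h, hv.le⟩); omega
    · omega
  rcases le_or_gt c 1 with h | h
  · have hc : c = 1 := by omega
    rw [hX, hc, one_mul]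
  · exfalso
    have h2c : (2:ℤ) ≤ c := by omega
    have : 2 * v ≤ c * v := mul_le_mul_of_nonneg_right h2c hv.le
    omega

lemma Dtw_eq (u v : ℕ) (w : Wt) :
    Dtw u v w = ((dyn1 u v w - dyn2 u v w)^2
      - 3*(dyn1 u v w + dyn2 u v w)*(2*((u:ℚ)/(v:ℚ)-2) - dyn1 u v w - dyn2 u v w))/(12*((u:ℚ)/(v:ℚ)))
      + (dyn1 u v w - dyn2 u v w)/6 + (2*((u:ℚ)/(v:ℚ))-3)/24 := by
  unfold Dtw Dwt kQ; ring_nf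

lemma omg_eq (u v : ℕ) (w : Wt) :
    omg u v w = -(2/27)*(dyn1 u v w - dyn2 u v w + (u:ℚ)/(v:ℚ))
      * (2*dyn1 u v w + dyn2 u v w - (u:ℚ)/(v:ℚ) + 3)
      * (dyn1 u v w + 2*dyn2 u v w - 2*((u:ℚ)/(v:ℚ)) + 3) := by
  unfold omg kQ; ring

lemma E2_of_D (t X Y Z W : ℚ) (ht : t ≠ 0)
    (hD : ((Z-W)^2 - 3*(Z+W)*(2*(t-2) - Z - W))/(12*t) + (Z-W)/6 + (2*t-3)/24
        = ((X-Y)^2 - 3*(X+Y)*(2*(t-2) - X - Y))/(12*t) + (X-Y)/6 + (2*t-3)/24) :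
    (Z-W+t)*(-(2*Z+W-t+3)) + (Z-W+t)*(Z+2*W-2*t+3) + (-(2*Z+W-t+3))*(Z+2*W-2*t+3)
    = (X-Y+t)*(-(2*X+Y-t+3)) + (X-Y+t)*(X+2*Y-2*t+3) + (-(2*X+Y-t+3))*(X+2*Y-2*t+3) := by
  field_simp at hD
  linear_combination (-(1:ℚ)/192) * hD

lemma E3_of_O (t X Y Z W : ℚ)
    (hO : -(2/27)*(Z-W+t)*(2*Z+W-t+3)*(Z+2*W-2*t+3) = -(2/27)*(X-Y+t)*(2*X+Y-t+3)*(X+2*Y-2*t+3)) :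
    (Z-W+t)*(-(2*Z+W-t+3))*(Z+2*W-2*t+3) = (X-Y+t)*(-(2*X+Y-t+3))*(X+2*Y-2*t+3) := by
  linear_combination (27/2 : ℚ) * hO

lemma root1 (t X Y Z W : ℚ)
    (hE2 : (Z-W+t)*(-(2*Z+W-t+3)) + (Z-W+t)*(Z+2*W-2*t+3) + (-(2*Z+W-t+3))*(Z+2*W-2*t+3)
         = (X-Y+t)*(-(2*X+Y-t+3)) + (X-Y+t)*(X+2*Y-2*t+3) + (-(2*X+Y-t+3))*(X+2*Y-2*t+3))
    (hE3 : (Z-W+t)*(-(2*Z+W-t+3))*(Z+2*W-2*t+3) = (X-Y+t)*(-(2*X+Y-t+3))*(X+2*Y-2*t+3)) :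
    ((Z-W+t) - (X-Y+t))*((Z-W+t) - (-(2*X+Y-t+3)))*((Z-W+t) - (X+2*Y-2*t+3)) = 0 := by
  linear_combination (-(Z-W+t))*hE2 + hE3

lemma root3 (t X Y Z W : ℚ)
    (hE2 : (Z-W+t)*(-(2*Z+W-t+3)) + (Z-W+t)*(Z+2*W-2*t+3) + (-(2*Z+W-t+3))*(Z+2*W-2*t+3)
         = (X-Y+t)*(-(2*X+Y-t+3)) + (X-Y+t)*(X+2*Y-2*t+3) + (-(2*X+Y-t+3))*(X+2*Y-2*t+3))
    (hE3 : (Z-W+t)*(-(2*Z+W-t+3))*(Z+2*W-2*t+3) = (X-Y+t)*(-(2*X+Y-t+3))*(X+2*Y-2*t+3)) :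
    ((Z+2*W-2*t+3) - (X-Y+t))*((Z+2*W-2*t+3) - (-(2*X+Y-t+3)))*((Z+2*W-2*t+3) - (X+2*Y-2*t+3)) = 0 := by
  linear_combination (-(Z+2*W-2*t+3))*hE2 + hE3

lemma gmap_mem (u v : ℕ) (hu : 3 ≤ u) (hv : 3 ≤ v) (w : Wt) (hw : InGamma u v w) :
    InGamma u v (gmap w) := by
  obtain ⟨⟨a0, a1, a2⟩, b0, b1, b2⟩ := w
  obtain ⟨⟨h1, h2, h3⟩, h4⟩ := hw
  have h3' : 1 ≤ b0 := h3
  have h4' : 1 ≤ b1 := h4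
  simp only [sumT] at h1 h2
  refine ⟨⟨?_, ?_, ?_⟩, ?_⟩ <;> simp only [InGamma, Surviving, sumT, gmap] <;> omega

lemma gmap_cube (u v : ℕ) (hu : 3 ≤ u) (hv : 3 ≤ v) (w : Wt) (hw : InGamma u v w) :
    gmap (gmap (gmap w)) = w := by
  obtain ⟨⟨a0, a1, a2⟩, b0, b1, b2⟩ := w
  obtain ⟨⟨h1, h2, h3⟩, h4⟩ := hw
  have h3' : 1 ≤ b0 := h3
  have h4' : 1 ≤ b1 := h4
  simp only [sumT] at h1 h2
  show (((a0, a1, a2), (b0 - 1 + 1, b1 - 1 + 1, b2 + 1 - 1)) : Wt) = ((a0, a1, a2), (b0, b1, b2))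
  have e1 : b0 - 1 + 1 = b0 := by omega
  have e2 : b1 - 1 + 1 = b1 := by omega
  have e3 : b2 + 1 - 1 = b2 := by omega
  rw [e1, e2, e3]

lemma gmap_ne (u v : ℕ) (hu : 3 ≤ u) (hv : 3 ≤ v) (hcop : Nat.Coprime u v)
    (w : Wt) (hw : InGamma u v w) : gmap w ≠ w := by
  obtain ⟨⟨a0, a1, a2⟩, b0, b1, b2⟩ := w
  obtain ⟨⟨h1, h2, h3⟩, h4⟩ := hw
  simp only [sumT] at h1 h2
  intro h
  simp only [gmap, Prod.mk.injEq] at h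
  obtain ⟨⟨e1, e2, e3⟩, f1, f2, f3⟩ := h
  have hu3 : (3:ℕ) ∣ u := by omega
  have hv3 : (3:ℕ) ∣ v := by omega
  have hg := Nat.dvd_gcd hu3 hv3
  rw [hcop] at hg
  omega

lemma dyn_gmap (u v : ℕ) (hu : 3 ≤ u) (hv : 3 ≤ v) (w : Wt) (hw : InGamma u v w) :
    dyn1 u v (gmap w) = kQ u v - dyn1 u v w - dyn2 u v w ∧
    dyn2 u v (gmap w) = dyn1 u v w + kQ u v + 3 := by
  obtain ⟨⟨a0, a1, a2⟩, b0, b1, b2⟩ := w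
  obtain ⟨⟨h1, h2, h3⟩, h4⟩ := hw
  simp only [sumT] at h1 h2
  have hv0 : ((v:ℚ)) ≠ 0 := Nat.cast_ne_zero.mpr (by omega)
  have hA : ((a0:ℚ)) = (u:ℚ) - 3 - a1 - a2 := by
    have h : (a0 + a1 + a2 + 3 : ℕ) = u := by omega
    have h' := congrArg (Nat.cast : ℕ → ℚ) h
    push_cast at h'; linarith
  have hB : ((b0:ℚ)) = (v:ℚ) - 1 - b1 - b2 := by
    have h : (b0 + b1 + b2 + 1 : ℕ) = v := by omega
    have h' := congrArg (Nat.cast : ℕ → ℚ) h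
    push_cast at h'; linarith
  have hb1 : ((b1 - 1 : ℕ) : ℚ) = (b1:ℚ) - 1 := by
    have h : 1 ≤ b1 := h4
    push_cast [h]; ring
  constructor
  · show (a0:ℚ) - (u:ℚ)/v * b0 = kQ u v - ((a1:ℚ) - (u:ℚ)/v * b1) - ((a2:ℚ) - (u:ℚ)/v * b2)
    rw [hA, hB]; unfold kQ; field_simp; ring
  · show (a1:ℚ) - (u:ℚ)/v * ((b1 - 1 : ℕ):ℚ) = ((a1:ℚ) - (u:ℚ)/v * b1) + kQ u v + 3
    rw [hb1]; unfold kQ; field_simp; ring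

lemma invar (u v : ℕ) (hu : 3 ≤ u) (hv : 3 ≤ v) (w : Wt) (hw : InGamma u v w) :
    Dtw u v (gmap w) = Dtw u v w ∧ omg u v (gmap w) = omg u v w := by
  obtain ⟨hd1, hd2⟩ := dyn_gmap u v hu hv w hw
  have hv0 : ((v:ℚ)) ≠ 0 := Nat.cast_ne_zero.mpr (by omega)
  have hu0 : ((u:ℚ)) ≠ 0 := Nat.cast_ne_zero.mpr (by omega)
  have hk3 : kQ u v + 3 = (u:ℚ)/(v:ℚ) := by unfold kQ; ring
  have ht0 : kQ u v + 3 ≠ 0 := by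
    rw [hk3]
    have : 0 < (u:ℚ)/(v:ℚ) := by positivity
    linarith
  constructor
  · unfold Dtw Dwt
    rw [hd1, hd2]
    field_simp
    ring
  · unfold omg
    rw [hd1, hd2]
    ring

lemma back (u v : ℕ) (hu : 3 ≤ u) (hv : 3 ≤ v) (hcop : Nat.Coprime u v)
    (w w' : Wt) (hw : InGamma u v w) (hw' : InGamma u v w')
    (hD : Dtw u v w' = Dtw u v w) (hO : omg u v w' = omg u v w) :
    w' = w ∨ w' = gmap w ∨ w' = gmap (gmap w) := by
  obtain ⟨⟨a0, a1, a2⟩, b0, b1, b2⟩ := w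
  obtain ⟨⟨c0, c1, c2⟩, d0, d1, d2⟩ := w'
  obtain ⟨⟨hw1, hw2, hw3⟩, hw4⟩ := hw
  obtain ⟨⟨hx1, hx2, hx3⟩, hx4⟩ := hw'
  have hw3' : 1 ≤ b0 := hw3
  have hw4' : 1 ≤ b1 := hw4
  have hx3' : 1 ≤ d0 := hx3
  have hx4' : 1 ≤ d1 := hx4
  simp only [sumT] at hw1 hw2 hx1 hx2
  have hA : a0 + a1 + a2 + 3 = u := by omega
  have hB : b0 + b1 + b2 + 1 = v := by omega
  have hC : c0 + c1 + c2 + 3 = u := by omega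
  have hE : d0 + d1 + d2 + 1 = v := by omega
  have hv0 : ((v:ℚ)) ≠ 0 := Nat.cast_ne_zero.mpr (by omega)
  have hu0 : ((u:ℚ)) ≠ 0 := Nat.cast_ne_zero.mpr (by omega)
  have ht0 : (u:ℚ)/(v:ℚ) ≠ 0 := div_ne_zero hu0 hv0
  have hvz : (0:ℤ) < (v:ℤ) := by omega
  have hvne : ((v:ℤ)) ≠ 0 := by omega
  have hXv : dyn1 u v (((a0,a1,a2),(b0,b1,b2)) : Wt) = (a1:ℚ) - (u:ℚ)/(v:ℚ) * (b1:ℚ) := rfl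
  have hYv : dyn2 u v (((a0,a1,a2),(b0,b1,b2)) : Wt) = (a2:ℚ) - (u:ℚ)/(v:ℚ) * (b2:ℚ) := rfl
  have hZv : dyn1 u v (((c0,c1,c2),(d0,d1,d2)) : Wt) = (c1:ℚ) - (u:ℚ)/(v:ℚ) * (d1:ℚ) := rfl
  have hWv : dyn2 u v (((c0,c1,c2),(d0,d1,d2)) : Wt) = (c2:ℚ) - (u:ℚ)/(v:ℚ) * (d2:ℚ) := rfl
  rw [Dtw_eq, Dtw_eq] at hD
  rw [omg_eq, omg_eq] at hO
  have hE2 := E2_of_D ((u:ℚ)/(v:ℚ))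
    (dyn1 u v (((a0,a1,a2),(b0,b1,b2)) : Wt)) (dyn2 u v (((a0,a1,a2),(b0,b1,b2)) : Wt))
    (dyn1 u v (((c0,c1,c2),(d0,d1,d2)) : Wt)) (dyn2 u v (((c0,c1,c2),(d0,d1,d2)) : Wt))
    ht0 hD
  have hE3 := E3_of_O ((u:ℚ)/(v:ℚ))
    (dyn1 u v (((a0,a1,a2),(b0,b1,b2)) : Wt)) (dyn2 u v (((a0,a1,a2),(b0,b1,b2)) : Wt))
    (dyn1 u v (((c0,c1,c2),(d0,d1,d2)) : Wt)) (dyn2 u v (((c0,c1,c2),(d0,d1,d2)) : Wt))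
    hO
  have hroot1 := root1 _ _ _ _ _ hE2 hE3
  have hroot3 := root3 _ _ _ _ _ hE2 hE3
  simp only [mul_eq_zero, sub_eq_zero] at hroot1 hroot3
  clear hE2 hE3 hD hO
  rcases hroot1 with (h1 | h1) | h1 <;> rcases hroot3 with (h3 | h3) | h3
  · -- case m1' = m1, m3' = m1
    obtain ⟨s, hs1, hs2⟩ := ratint u v (by omega) hcop ((c1:ℤ) - c2 - ((a1:ℤ) - a2)) ((d1:ℤ) - d2 - 1 - ((b1:ℤ) - b2 - 1))
      (by push_cast; linear_combination h1 - hZv + hWv + hXv - hYv)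
    obtain ⟨r, hr1, hr2⟩ := ratint u v (by omega) hcop ((c1:ℤ) + 2*c2 + 3 - ((a1:ℤ) - a2)) ((d1:ℤ) + 2*d2 + 2 - ((b1:ℤ) - b2 - 1))
      (by push_cast; linear_combination h3 - hZv - 2*hWv + hXv - hYv)
    have h3v : (r - s) * (v:ℤ) = 3 * ((d2:ℤ) + 1) := by linear_combination hs1 - hr1
    have h3u : (r - s) * (u:ℤ) = 3 * ((c2:ℤ) + 1) := by linear_combination hs2 - hr2
    obtain ⟨c, hc⟩ := three_dvd u v hcop s r _ _ h3v h3u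
    have hEv : ((d2:ℤ) + 1) = c * (v:ℤ) := mul_left_cancel₀ (by norm_num : (3:ℤ) ≠ 0)
      (by linear_combination -h3v + (v:ℤ)*hc)
    exact absurd (mulv_pos_ge hvz hEv (by omega)) (by omega)
  · -- case m1' = m1, m3' = m2
    obtain ⟨s, hs1, hs2⟩ := ratint u v (by omega) hcop ((c1:ℤ) - c2 - ((a1:ℤ) - a2)) ((d1:ℤ) - d2 - 1 - ((b1:ℤ) - b2 - 1))
      (by push_cast; linear_combination h1 - hZv + hWv + hXv - hYv)
    obtain ⟨r, hr1, hr2⟩ := ratint u v (by omega) hcop ((c1:ℤ) + 2*c2 + 3 - (-(2*(a1:ℤ) + a2 + 3))) ((d1:ℤ) + 2*d2 + 2 - (-(2*(b1:ℤ) + b2 + 1)))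
      (by push_cast; linear_combination h3 - hZv - 2*hWv - 2*hXv - hYv)
    have h3v : (r - s) * (v:ℤ) = 3 * ((d2:ℤ) + 1 + b1) := by linear_combination hs1 - hr1
    have h3u : (r - s) * (u:ℤ) = 3 * ((c2:ℤ) + a1 + 2) := by linear_combination hs2 - hr2
    obtain ⟨c, hc⟩ := three_dvd u v hcop s r _ _ h3v h3u
    have hEv : ((d2:ℤ) + 1 + b1) = c * (v:ℤ) := mul_left_cancel₀ (by norm_num : (3:ℤ) ≠ 0)
      (by linear_combination -h3v + (v:ℤ)*hc)
    have hEu : ((c2:ℤ) + a1 + 2) = c * (u:ℤ) := mul_left_cancel₀ (by norm_num : (3:ℤ) ≠ 0)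
      (by linear_combination -h3u + (u:ℤ)*hc)
    have hFv : ((d1:ℤ) + b2 + 1) = (s + c) * (v:ℤ) := mul_left_cancel₀ (by norm_num : (3:ℤ) ≠ 0)
      (by linear_combination 2*hs1 + hr1 + (v:ℤ)*hc)
    have hFu : ((c1:ℤ) + a2 + 2) = (s + c) * (u:ℤ) := mul_left_cancel₀ (by norm_num : (3:ℤ) ≠ 0)
      (by linear_combination 2*hs2 + hr2 + (u:ℤ)*hc)
    have hgeE := mulv_pos_ge hvz hEv (by omega)
    exact absurd (mulv_pos_ge hvz hFv (by omega)) (by omega)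
  · -- case m1' = m1, m3' = m3
    obtain ⟨s, hs1, hs2⟩ := ratint u v (by omega) hcop ((c1:ℤ) - c2 - ((a1:ℤ) - a2)) ((d1:ℤ) - d2 - 1 - ((b1:ℤ) - b2 - 1))
      (by push_cast; linear_combination h1 - hZv + hWv + hXv - hYv)
    obtain ⟨r, hr1, hr2⟩ := ratint u v (by omega) hcop ((c1:ℤ) + 2*c2 + 3 - ((a1:ℤ) + 2*a2 + 3)) ((d1:ℤ) + 2*d2 + 2 - ((b1:ℤ) + 2*b2 + 2))
      (by push_cast; linear_combination h3 - hZv - 2*hWv + hXv + 2*hYv)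
    have h3v : (r - s) * (v:ℤ) = 3 * ((d2:ℤ) - b2) := by linear_combination hs1 - hr1
    have h3u : (r - s) * (u:ℤ) = 3 * ((c2:ℤ) - a2) := by linear_combination hs2 - hr2
    obtain ⟨c, hc⟩ := three_dvd u v hcop s r _ _ h3v h3u
    have hEv : ((d2:ℤ) - b2) = c * (v:ℤ) := mul_left_cancel₀ (by norm_num : (3:ℤ) ≠ 0)
      (by linear_combination -h3v + (v:ℤ)*hc)
    have hEu : ((c2:ℤ) - a2) = c * (u:ℤ) := mul_left_cancel₀ (by norm_num : (3:ℤ) ≠ 0)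
      (by linear_combination -h3u + (u:ℤ)*hc)
    have hFv : ((d1:ℤ) - b1) = (s + c) * (v:ℤ) := mul_left_cancel₀ (by norm_num : (3:ℤ) ≠ 0)
      (by linear_combination 2*hs1 + hr1 + (v:ℤ)*hc)
    have hFu : ((c1:ℤ) - a1) = (s + c) * (u:ℤ) := mul_left_cancel₀ (by norm_num : (3:ℤ) ≠ 0)
      (by linear_combination 2*hs2 + hr2 + (u:ℤ)*hc)
    have hz1 := mulv_zero hvz hEv (by omega) (by omega)
    have hc0 : c = 0 := by
      rcases mul_eq_zero.mp (hEv.symm.trans hz1) with h | h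
      · exact h
      · exact absurd h hvne
    have hz2 : ((c2:ℤ) - a2) = 0 := by rw [hEu, hc0, zero_mul]
    have hz3 := mulv_zero hvz hFv (by omega) (by omega)
    have hsc0 : s + c = 0 := by
      rcases mul_eq_zero.mp (hFv.symm.trans hz3) with h | h
      · exact h
      · exact absurd h hvne
    have hz4 : ((c1:ℤ) - a1) = 0 := by rw [hFu, hsc0, zero_mul]
    left
    simp only [Prod.mk.injEq, true_and, and_true]
    omega
  · -- case m1' = m2, m3' = m1
    obtain ⟨s, hs1, hs2⟩ := ratint u v (by omega) hcop ((c1:ℤ) - c2 - (-(2*(a1:ℤ) + a2 + 3))) ((d1:ℤ) - d2 - 1 - (-(2*(b1:ℤ) + b2 + 1)))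
      (by push_cast; linear_combination h1 - hZv + hWv - 2*hXv - hYv)
    obtain ⟨r, hr1, hr2⟩ := ratint u v (by omega) hcop ((c1:ℤ) + 2*c2 + 3 - ((a1:ℤ) - a2)) ((d1:ℤ) + 2*d2 + 2 - ((b1:ℤ) - b2 - 1))
      (by push_cast; linear_combination h3 - hZv - 2*hWv + hXv - hYv)
    have h3v : (r - s) * (v:ℤ) = 3 * ((d2:ℤ) + 1 - b1) := by linear_combination hs1 - hr1
    have h3u : (r - s) * (u:ℤ) = 3 * ((c2:ℤ) - a1) := by linear_combination hs2 - hr2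
    obtain ⟨c, hc⟩ := three_dvd u v hcop s r _ _ h3v h3u
    have hEv : ((d2:ℤ) + 1 - b1) = c * (v:ℤ) := mul_left_cancel₀ (by norm_num : (3:ℤ) ≠ 0)
      (by linear_combination -h3v + (v:ℤ)*hc)
    have hEu : ((c2:ℤ) - a1) = c * (u:ℤ) := mul_left_cancel₀ (by norm_num : (3:ℤ) ≠ 0)
      (by linear_combination -h3u + (u:ℤ)*hc)
    have hFv : ((d1:ℤ) + b1 + b2 + 1) = (s + c) * (v:ℤ) := mul_left_cancel₀ (by norm_num : (3:ℤ) ≠ 0)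
      (by linear_combination 2*hs1 + hr1 + (v:ℤ)*hc)
    have hFu : ((c1:ℤ) + a1 + a2 + 3) = (s + c) * (u:ℤ) := mul_left_cancel₀ (by norm_num : (3:ℤ) ≠ 0)
      (by linear_combination 2*hs2 + hr2 + (u:ℤ)*hc)
    have hz1 := mulv_zero hvz hEv (by omega) (by omega)
    have hc0 : c = 0 := by
      rcases mul_eq_zero.mp (hEv.symm.trans hz1) with h | h
      · exact h
      · exact absurd h hvne
    have hz2 : ((c2:ℤ) - a1) = 0 := by rw [hEu, hc0, zero_mul]
    have hone := mulv_one hvz hFv (by omega) (by omega)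
    have hsc1 : s + c = 1 := mul_right_cancel₀ hvne (by rw [one_mul, ← hFv]; exact hone)
    have hz4 : ((c1:ℤ) + a1 + a2 + 3) = (u:ℤ) := by rw [hFu, hsc1, one_mul]
    right; left
    simp only [gmap, Prod.mk.injEq, true_and, and_true]
    omega
  · -- case m1' = m2, m3' = m2
    obtain ⟨s, hs1, hs2⟩ := ratint u v (by omega) hcop ((c1:ℤ) - c2 - (-(2*(a1:ℤ) + a2 + 3))) ((d1:ℤ) - d2 - 1 - (-(2*(b1:ℤ) + b2 + 1)))
      (by push_cast; linear_combination h1 - hZv + hWv - 2*hXv - hYv)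
    obtain ⟨r, hr1, hr2⟩ := ratint u v (by omega) hcop ((c1:ℤ) + 2*c2 + 3 - (-(2*(a1:ℤ) + a2 + 3))) ((d1:ℤ) + 2*d2 + 2 - (-(2*(b1:ℤ) + b2 + 1)))
      (by push_cast; linear_combination h3 - hZv - 2*hWv - 2*hXv - hYv)
    have h3v : (r - s) * (v:ℤ) = 3 * ((d2:ℤ) + 1) := by linear_combination hs1 - hr1
    have h3u : (r - s) * (u:ℤ) = 3 * ((c2:ℤ) + 1) := by linear_combination hs2 - hr2
    obtain ⟨c, hc⟩ := three_dvd u v hcop s r _ _ h3v h3u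
    have hEv : ((d2:ℤ) + 1) = c * (v:ℤ) := mul_left_cancel₀ (by norm_num : (3:ℤ) ≠ 0)
      (by linear_combination -h3v + (v:ℤ)*hc)
    exact absurd (mulv_pos_ge hvz hEv (by omega)) (by omega)
  · -- case m1' = m2, m3' = m3
    obtain ⟨s, hs1, hs2⟩ := ratint u v (by omega) hcop ((c1:ℤ) - c2 - (-(2*(a1:ℤ) + a2 + 3))) ((d1:ℤ) - d2 - 1 - (-(2*(b1:ℤ) + b2 + 1)))
      (by push_cast; linear_combination h1 - hZv + hWv - 2*hXv - hYv)
    obtain ⟨r, hr1, hr2⟩ := ratint u v (by omega) hcop ((c1:ℤ) + 2*c2 + 3 - ((a1:ℤ) + 2*a2 + 3)) ((d1:ℤ) + 2*d2 + 2 - ((b1:ℤ) + 2*b2 + 2))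
      (by push_cast; linear_combination h3 - hZv - 2*hWv + hXv + 2*hYv)
    have h3v : (r - s) * (v:ℤ) = 3 * ((d2:ℤ) - b1 - b2) := by linear_combination hs1 - hr1
    have h3u : (r - s) * (u:ℤ) = 3 * ((c2:ℤ) - a1 - a2 - 1) := by linear_combination hs2 - hr2
    obtain ⟨c, hc⟩ := three_dvd u v hcop s r _ _ h3v h3u
    have hEv : ((d2:ℤ) - b1 - b2) = c * (v:ℤ) := mul_left_cancel₀ (by norm_num : (3:ℤ) ≠ 0)
      (by linear_combination -h3v + (v:ℤ)*hc)
    have hEu : ((c2:ℤ) - a1 - a2 - 1) = c * (u:ℤ) := mul_left_cancel₀ (by norm_num : (3:ℤ) ≠ 0)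
      (by linear_combination -h3u + (u:ℤ)*hc)
    have hFv : ((d1:ℤ) + b1) = (s + c) * (v:ℤ) := mul_left_cancel₀ (by norm_num : (3:ℤ) ≠ 0)
      (by linear_combination 2*hs1 + hr1 + (v:ℤ)*hc)
    have hFu : ((c1:ℤ) + a1 + 2) = (s + c) * (u:ℤ) := mul_left_cancel₀ (by norm_num : (3:ℤ) ≠ 0)
      (by linear_combination 2*hs2 + hr2 + (u:ℤ)*hc)
    have hgeF := mulv_pos_ge hvz hFv (by omega)
    exact absurd (mulv_neg_le hvz hEv (by omega)) (by omega)
  · -- case m1' = m3, m3' = m1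
    obtain ⟨s, hs1, hs2⟩ := ratint u v (by omega) hcop ((c1:ℤ) - c2 - ((a1:ℤ) + 2*a2 + 3)) ((d1:ℤ) - d2 - 1 - ((b1:ℤ) + 2*b2 + 2))
      (by push_cast; linear_combination h1 - hZv + hWv + hXv + 2*hYv)
    obtain ⟨r, hr1, hr2⟩ := ratint u v (by omega) hcop ((c1:ℤ) + 2*c2 + 3 - ((a1:ℤ) - a2)) ((d1:ℤ) + 2*d2 + 2 - ((b1:ℤ) - b2 - 1))
      (by push_cast; linear_combination h3 - hZv - 2*hWv + hXv - hYv)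
    have h3v : (r - s) * (v:ℤ) = 3 * ((d2:ℤ) + b2 + 2) := by linear_combination hs1 - hr1
    have h3u : (r - s) * (u:ℤ) = 3 * ((c2:ℤ) + a2 + 2) := by linear_combination hs2 - hr2
    obtain ⟨c, hc⟩ := three_dvd u v hcop s r _ _ h3v h3u
    have hEv : ((d2:ℤ) + b2 + 2) = c * (v:ℤ) := mul_left_cancel₀ (by norm_num : (3:ℤ) ≠ 0)
      (by linear_combination -h3v + (v:ℤ)*hc)
    have hEu : ((c2:ℤ) + a2 + 2) = c * (u:ℤ) := mul_left_cancel₀ (by norm_num : (3:ℤ) ≠ 0)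
      (by linear_combination -h3u + (u:ℤ)*hc)
    have hFv : ((d1:ℤ) - b1 - b2 - 1) = (s + c) * (v:ℤ) := mul_left_cancel₀ (by norm_num : (3:ℤ) ≠ 0)
      (by linear_combination 2*hs1 + hr1 + (v:ℤ)*hc)
    have hFu : ((c1:ℤ) - a1 - a2 - 1) = (s + c) * (u:ℤ) := mul_left_cancel₀ (by norm_num : (3:ℤ) ≠ 0)
      (by linear_combination 2*hs2 + hr2 + (u:ℤ)*hc)
    have hgeE := mulv_pos_ge hvz hEv (by omega)
    exact absurd (mulv_neg_le hvz hFv (by omega)) (by omega)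
  · -- case m1' = m3, m3' = m2
    obtain ⟨s, hs1, hs2⟩ := ratint u v (by omega) hcop ((c1:ℤ) - c2 - ((a1:ℤ) + 2*a2 + 3)) ((d1:ℤ) - d2 - 1 - ((b1:ℤ) + 2*b2 + 2))
      (by push_cast; linear_combination h1 - hZv + hWv + hXv + 2*hYv)
    obtain ⟨r, hr1, hr2⟩ := ratint u v (by omega) hcop ((c1:ℤ) + 2*c2 + 3 - (-(2*(a1:ℤ) + a2 + 3))) ((d1:ℤ) + 2*d2 + 2 - (-(2*(b1:ℤ) + b2 + 1)))
      (by push_cast; linear_combination h3 - hZv - 2*hWv - 2*hXv - hYv)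
    have h3v : (r - s) * (v:ℤ) = 3 * ((d2:ℤ) + b1 + b2 + 2) := by linear_combination hs1 - hr1
    have h3u : (r - s) * (u:ℤ) = 3 * ((c2:ℤ) + a1 + a2 + 3) := by linear_combination hs2 - hr2
    obtain ⟨c, hc⟩ := three_dvd u v hcop s r _ _ h3v h3u
    have hEv : ((d2:ℤ) + b1 + b2 + 2) = c * (v:ℤ) := mul_left_cancel₀ (by norm_num : (3:ℤ) ≠ 0)
      (by linear_combination -h3v + (v:ℤ)*hc)
    have hEu : ((c2:ℤ) + a1 + a2 + 3) = c * (u:ℤ) := mul_left_cancel₀ (by norm_num : (3:ℤ) ≠ 0)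
      (by linear_combination -h3u + (u:ℤ)*hc)
    have hFv : ((d1:ℤ) - b2 - 1) = (s + c) * (v:ℤ) := mul_left_cancel₀ (by norm_num : (3:ℤ) ≠ 0)
      (by linear_combination 2*hs1 + hr1 + (v:ℤ)*hc)
    have hFu : ((c1:ℤ) - a2) = (s + c) * (u:ℤ) := mul_left_cancel₀ (by norm_num : (3:ℤ) ≠ 0)
      (by linear_combination 2*hs2 + hr2 + (u:ℤ)*hc)
    have hone := mulv_one hvz hEv (by omega) (by omega)
    have hc1 : c = 1 := mul_right_cancel₀ hvne (by rw [one_mul, ← hEv]; exact hone)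
    have hz2 : ((c2:ℤ) + a1 + a2 + 3) = (u:ℤ) := by rw [hEu, hc1, one_mul]
    have hz3 := mulv_zero hvz hFv (by omega) (by omega)
    have hsc0 : s + c = 0 := by
      rcases mul_eq_zero.mp (hFv.symm.trans hz3) with h | h
      · exact h
      · exact absurd h hvne
    have hz4 : ((c1:ℤ) - a2) = 0 := by rw [hFu, hsc0, zero_mul]
    right; right
    simp only [gmap, Prod.mk.injEq, true_and, and_true]
    omega
  · -- case m1' = m3, m3' = m3
    obtain ⟨s, hs1, hs2⟩ := ratint u v (by omega) hcop ((c1:ℤ) - c2 - ((a1:ℤ) + 2*a2 + 3)) ((d1:ℤ) - d2 - 1 - ((b1:ℤ) + 2*b2 + 2))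
      (by push_cast; linear_combination h1 - hZv + hWv + hXv + 2*hYv)
    obtain ⟨r, hr1, hr2⟩ := ratint u v (by omega) hcop ((c1:ℤ) + 2*c2 + 3 - ((a1:ℤ) + 2*a2 + 3)) ((d1:ℤ) + 2*d2 + 2 - ((b1:ℤ) + 2*b2 + 2))
      (by push_cast; linear_combination h3 - hZv - 2*hWv + hXv + 2*hYv)
    have h3v : (r - s) * (v:ℤ) = 3 * ((d2:ℤ) + 1) := by linear_combination hs1 - hr1
    have h3u : (r - s) * (u:ℤ) = 3 * ((c2:ℤ) + 1) := by linear_combination hs2 - hr2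
    obtain ⟨c, hc⟩ := three_dvd u v hcop s r _ _ h3v h3u
    have hEv : ((d2:ℤ) + 1) = c * (v:ℤ) := mul_left_cancel₀ (by norm_num : (3:ℤ) ≠ 0)
      (by linear_combination -h3v + (v:ℤ)*hc)
    exact absurd (mulv_pos_ge hvz hEv (by omega)) (by omega)

/-- `g` restricts to a free `ℤ/3`-action on `Γ_{u,v}` preserving
`(Δ^tw, ω)`, and the fibres of `λ ↦ (Δ^tw(λ), ω(λ))` on `Γ_{u,v}` are exactly the
`g`-orbits (so this map is precisely 3-to-1 onto its image). -/
theorem gmap_Z3_action (u v : ℕ) (hu : 3 ≤ u) (hv : 3 ≤ v) (hcop : Nat.Coprime u v) :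
    (∀ w : Wt, InGamma u v w → InGamma u v (gmap w)) ∧
    (∀ w : Wt, InGamma u v w → gmap (gmap (gmap w)) = w) ∧
    (∀ w : Wt, InGamma u v w → gmap w ≠ w) ∧
    (∀ w : Wt, InGamma u v w →
      Dtw u v (gmap w) = Dtw u v w ∧ omg u v (gmap w) = omg u v w) ∧
    (∀ w w' : Wt, InGamma u v w → InGamma u v w' →
      ((Dtw u v w' = Dtw u v w ∧ omg u v w' = omg u v w) ↔
        (w' = w ∨ w' = gmap w ∨ w' = gmap (gmap w)))) := by
  refine ⟨fun w hw => gmap_mem u v hu hv w hw,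
          fun w hw => gmap_cube u v hu hv w hw,
          fun w hw => gmap_ne u v hu hv hcop w hw,
          fun w hw => invar u v hu hv w hw,
          fun w w' hw hw' => ?_⟩
  constructor
  · rintro ⟨hD, hO⟩
    exact back u v hu hv hcop w w' hw hw' hD hO
  · rintro (rfl | rfl | rfl)
    · exact ⟨rfl, rfl⟩
    · exact invar u v hu hv w hw
    · have h1 := invar u v hu hv w hw
      have h2 := invar u v hu hv (gmap w) (gmap_mem u v hu hv w hw)
      exact ⟨h2.1.trans h1.1, h2.2.trans h1.2⟩

end BPW
end

section
/- Let u, v ≥ 3 be coprime integers and k = −3 + u/v. Define c on pairs by c(λ)^I = (λ^I_2, λ^I_1, λ^I_0) and c(λ)^F = (λ^F_2 + 1, λ^F_1, λ^F_0 − 1). Then c maps S_{u,v} into S_{u,v} and Γ_{u,v} into Γ_{u,v}, c² is the identity, and for every λ ∈ S_{u,v} one has Δ^tw(c(λ)) = Δ^tw(λ) and ω(c(λ)) = −ω(λ). -/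
namespace BPW

/-- The conjugation map `c : λ ↦ μ` with `μ^I = (λ^I₂, λ^I₁, λ^I₀)` and
`μ^F = (λ^F₂ + 1, λ^F₁, λ^F₀ − 1)`. -/
def cmap (w : Wt) : Wt :=
  ((w.1.2.2, w.1.2.1, w.1.1), (w.2.2.2 + 1, w.2.2.1, w.2.1 - 1))

/-- `c` maps `S_{u,v}` into `S_{u,v}` and `Γ_{u,v}` into `Γ_{u,v}`,
`c²` is the identity, and `Δ^tw(c(λ)) = Δ^tw(λ)`, `ω(c(λ)) = −ω(λ)`. -/
theorem cmap_Z2_action (u v : ℕ) (hu : 3 ≤ u) (hv : 3 ≤ v) (hcop : Nat.Coprime u v) :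
    (∀ w : Wt, Surviving u v w → Surviving u v (cmap w)) ∧
    (∀ w : Wt, InGamma u v w → InGamma u v (cmap w)) ∧
    (∀ w : Wt, Surviving u v w → cmap (cmap w) = w) ∧
    (∀ w : Wt, Surviving u v w →
      Dtw u v (cmap w) = Dtw u v w ∧ omg u v (cmap w) = -omg u v w) := by
  have hv0 : (v:ℚ) ≠ 0 := by
    have : 0 < v := by omega
    exact_mod_cast this.ne'
  have hu0 : (u:ℚ) ≠ 0 := by
    have : 0 < u := by omega
    exact_mod_cast this.ne'
  refine ⟨?_, ?_, ?_, ?_⟩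
  · rintro ⟨⟨a0,a1,a2⟩,⟨b0,b1,b2⟩⟩ ⟨h1,h2,h3⟩
    simp only [Surviving, sumT, cmap] at *
    omega
  · rintro ⟨⟨a0,a1,a2⟩,⟨b0,b1,b2⟩⟩ ⟨⟨h1,h2,h3⟩,h4⟩
    simp only [InGamma, Surviving, sumT, cmap] at *
    omega
  · rintro ⟨⟨a0,a1,a2⟩,⟨b0,b1,b2⟩⟩ ⟨h1,h2,h3⟩
    simp only [Surviving, sumT, cmap] at *
    refine Prod.ext rfl (Prod.ext ?_ ?_) <;> simp <;> omega
  · rintro ⟨⟨a0,a1,a2⟩,⟨b0,b1,b2⟩⟩ ⟨h1,h2,h3⟩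
    simp only [Surviving, sumT] at h1 h2 h3
    have hA : (a0:ℚ) = (u:ℚ) - 3 - a1 - a2 := by
      have : a0 + a1 + a2 + 3 = u := by omega
      have := congrArg (fun n : ℕ => (n:ℚ)) this
      push_cast at this; linarith
    have hB : (b0:ℚ) = (v:ℚ) - 1 - b1 - b2 := by
      have : b0 + b1 + b2 + 1 = v := by omega
      have := congrArg (fun n : ℕ => (n:ℚ)) this
      push_cast at this; linarith
    have hB1 : ((b0 - 1 : ℕ) : ℚ) = (b0:ℚ) - 1 := by
      have := Nat.cast_sub (R := ℚ) h3; push_cast at this ⊢; linarith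
    constructor
    · simp only [Dtw, Dwt, dyn1, dyn2, kQ, cmap, jwt, hB1]
      rw [hA, hB]
      have hk : (-3 + (u:ℚ) / (v:ℚ) + 3) = (u:ℚ) / (v:ℚ) := by ring
      rw [hk]
      field_simp
      ring
    · simp only [omg, dyn1, dyn2, kQ, cmap, hB1]
      rw [hA, hB]
      field_simp
      ring

end BPW
end

section
/- Let u, v ≥ 3 be coprime integers and k = −3 + u/v. For λ ∈ Γ_{u,v}, define μ by μ^I = (λ^I_0, λ^I_2, λ^I_1) and μ^F = (λ^F_0, λ^F_2 + 1, λ^F_1 − 1). Then μ ∈ Γ_{u,v}, and moreover j^tw(μ) = −j^tw(λ) − 1 and Δ^tw(μ) = Δ^tw(λ). -/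
namespace BPW

/-- The map `λ ↦ μ` with `μ^I = (λ^I₀, λ^I₂, λ^I₁)` and
`μ^F = (λ^F₀, λ^F₂ + 1, λ^F₁ − 1)`. -/
def mu17 (w : Wt) : Wt :=
  ((w.1.1, w.1.2.2, w.1.2.1), (w.2.1, w.2.2.2 + 1, w.2.2.1 - 1))

/-- for `λ ∈ Γ_{u,v}`, the weight `μ` with `μ^I = (λ^I₀, λ^I₂, λ^I₁)`
and `μ^F = (λ^F₀, λ^F₂+1, λ^F₁−1)` lies in `Γ_{u,v}`, with `j^tw(μ) = −j^tw(λ) − 1` and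
`Δ^tw(μ) = Δ^tw(λ)`. -/
theorem mu17_in_Gamma (u v : ℕ) (hu : 3 ≤ u) (hv : 3 ≤ v) (hcop : Nat.Coprime u v)
    (w : Wt) (hw : InGamma u v w) :
    InGamma u v (mu17 w) ∧ jtw u v (mu17 w) = -jtw u v w - 1 ∧
    Dtw u v (mu17 w) = Dtw u v w := by
  obtain ⟨⟨hI, hF, h0⟩, h1⟩ := hw
  have hv0 : (v : ℚ) ≠ 0 := by positivity
  have hu0 : (u : ℚ) ≠ 0 := by positivity
  have hc : ((w.2.2.1 - 1 : ℕ) : ℚ) = (w.2.2.1 : ℚ) - 1 := by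
    push_cast [Nat.cast_sub h1]; ring
  refine ⟨⟨⟨?_, ?_, h0⟩, Nat.le_add_left 1 _⟩, ?_, ?_⟩
  · simp only [mu17, sumT] at hI ⊢; omega
  · simp only [mu17, sumT] at hF ⊢; omega
  · simp only [jtw, jwt, dyn1, dyn2, kQ, mu17, hc]
    push_cast
    field_simp
    ring
  · simp only [Dtw, Dwt, dyn1, dyn2, kQ, mu17, hc]
    push_cast
    have h3 : -3 + (u : ℚ) / v + 3 = u / v := by ring
    rw [h3]
    field_simp
    ring

end BPW
end

section
/- Let u ≥ 3 and v ≥ 2 be coprime integers and k = −3 + u/v. For λ ∈ S_{u,v} with λ^F_1 = 0, define μ by μ^I = (λ^I_2, λ^I_1, λ^I_0) and μ^F = (λ^F_2 + 1, 0, λ^F_0 − 1). Then μ ∈ S_{u,v} with μ^F_1 = 0, and moreover j^tw(μ) = λ^I_1 − j^tw(λ) and Δ^tw(μ) = Δ^tw(λ). -/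
namespace BPW

/-- The map `λ ↦ μ` with `μ^I = (λ^I₂, λ^I₁, λ^I₀)` and `μ^F = (λ^F₂ + 1, 0, λ^F₀ − 1)`. -/
def mu18 (w : Wt) : Wt :=
  ((w.1.2.2, w.1.2.1, w.1.1), (w.2.2.2 + 1, 0, w.2.1 - 1))

/-- for `λ ∈ S_{u,v}` with `λ^F₁ = 0`, the weight `μ` with
`μ^I = (λ^I₂, λ^I₁, λ^I₀)` and `μ^F = (λ^F₂+1, 0, λ^F₀−1)` lies in `S_{u,v}` with
`μ^F₁ = 0`, and `j^tw(μ) = λ^I₁ − j^tw(λ)`, `Δ^tw(μ) = Δ^tw(λ)`. -/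
theorem mu18_conjugate_hw (u v : ℕ) (hu : 3 ≤ u) (hv : 2 ≤ v) (hcop : Nat.Coprime u v)
    (w : Wt) (hw : Surviving u v w) (hF1 : w.2.2.1 = 0) :
    Surviving u v (mu18 w) ∧ (mu18 w).2.2.1 = 0 ∧
    jtw u v (mu18 w) = (w.1.2.1 : ℚ) - jtw u v w ∧
    Dtw u v (mu18 w) = Dtw u v w := by
  obtain ⟨⟨p, q, r⟩, a, b, c⟩ := w
  obtain ⟨hI, hF, ha⟩ := hw
  simp only at hF1 ha
  subst hF1
  simp only [sumT] at hI hF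
  have hc : ((a - 1 : ℕ) : ℚ) = (a : ℚ) - 1 := by
    push_cast [Nat.cast_sub ha]; ring
  have hvq : (v : ℚ) ≠ 0 := by positivity
  have hI' : (p : ℚ) + q + r = (u : ℚ) - 3 := by
    have h := congrArg (fun n : ℕ => (n : ℚ)) hI
    push_cast [Nat.cast_sub hu] at h
    linarith
  have hF' : (a : ℚ) + c = (v : ℚ) - 1 := by
    have h := congrArg (fun n : ℕ => (n : ℚ)) hF
    push_cast [Nat.cast_sub (by omega : 1 ≤ v)] at h
    linarith
  have hcq : (c : ℚ) = (v : ℚ) - 1 - a := by linarith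
  have hrq : (r : ℚ) = (u : ℚ) - 3 - p - q := by linarith
  refine ⟨⟨?_, ?_, ?_⟩, rfl, ?_, ?_⟩
  · show sumT _ = u - 3
    simp only [sumT, mu18]; omega
  · show sumT _ = v - 1
    simp only [sumT, mu18]; omega
  · show 1 ≤ c + 1
    omega
  · -- jtw
    simp only [jtw, jwt, dyn1, dyn2, kQ, mu18, hc]
    push_cast
    rw [hcq, hrq]
    field_simp
    ring
  · -- Dtw
    simp only [Dtw, Dwt, dyn1, dyn2, kQ, mu18, hc]
    push_cast
    rw [hcq, hrq]
    have hu0 : (u : ℚ) ≠ 0 := by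
      have : (3:ℚ) ≤ u := by exact_mod_cast hu
      linarith
    have hk3 : -3 + (u : ℚ) / v + 3 = (u : ℚ) / v := by ring
    rw [hk3]
    field_simp
    ring

end BPW
end

section
/- Let u ≥ 3 and v ≥ 2 be coprime integers and k = −3 + u/v. For λ ∈ S_{u,v} with λ^F_1 = 0, define μ by μ^I = (λ^I_2, λ^I_0, λ^I_1) and μ^F = (λ^F_2 + 1, λ^F_0 − 1, 0). Then μ ∈ S_{u,v}, and moreover j(μ) = j(λ) + (2k+3)/3 − λ^I_1 and Δ(μ) = Δ(λ) + j(λ) + (2k+3)/6 − λ^I_1/2. (These identities encode that the spectral flow of the simple highest-weight module labelled by λ is the simple highest-weight module labelled by μ.) -/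
namespace BPW

/-- The map `λ ↦ μ` with `μ^I = (λ^I₂, λ^I₀, λ^I₁)` and `μ^F = (λ^F₂ + 1, λ^F₀ − 1, 0)`. -/
def mu19 (w : Wt) : Wt :=
  ((w.1.2.2, w.1.1, w.1.2.1), (w.2.2.2 + 1, w.2.1 - 1, 0))

/-- for `λ ∈ S_{u,v}` with `λ^F₁ = 0`, the weight `μ` with
`μ^I = (λ^I₂, λ^I₀, λ^I₁)` and `μ^F = (λ^F₂+1, λ^F₀−1, 0)` lies in `S_{u,v}`, and
`j(μ) = j(λ) + (2k+3)/3 − λ^I₁`, `Δ(μ) = Δ(λ) + j(λ) + (2k+3)/6 − λ^I₁/2`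
(the spectral flow identities). -/
theorem mu19_spectral_flow (u v : ℕ) (hu : 3 ≤ u) (hv : 2 ≤ v) (hcop : Nat.Coprime u v)
    (w : Wt) (hw : Surviving u v w) (hF1 : w.2.2.1 = 0) :
    Surviving u v (mu19 w) ∧
    jwt u v (mu19 w) = jwt u v w + (2 * kQ u v + 3) / 3 - (w.1.2.1 : ℚ) ∧
    Dwt u v (mu19 w) = Dwt u v w + jwt u v w + (2 * kQ u v + 3) / 6 - (w.1.2.1 : ℚ) / 2 := by
  obtain ⟨⟨a0, a1, a2⟩, b0, b1, b2⟩ := w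
  simp only at hF1
  subst hF1
  simp only [Surviving, sumT, mu19] at hw ⊢
  obtain ⟨hI, hF, hb0⟩ := hw
  have hv0 : (v : ℚ) ≠ 0 := by positivity
  have hu0 : (u : ℚ) ≠ 0 := by positivity
  have hcast : ((b0 - 1 : ℕ) : ℚ) = (b0 : ℚ) - 1 := by
    rw [Nat.cast_sub hb0, Nat.cast_one]
  have ha0 : (a0 : ℚ) = (u : ℚ) - 3 - a1 - a2 := by
    have h : a0 + a1 + a2 + 3 = u := by omega
    have := congrArg (Nat.cast : ℕ → ℚ) h
    push_cast at this; linarith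
  have hb0q : (b0 : ℚ) = (v : ℚ) - 1 - b2 := by
    have h : b0 + b2 + 1 = v := by omega
    have := congrArg (Nat.cast : ℕ → ℚ) h
    push_cast at this; linarith
  refine ⟨⟨by omega, by omega, by omega⟩, ?_, ?_⟩ <;>
  · simp only [jwt, Dwt, dyn1, dyn2, kQ, hcast]
    push_cast
    rw [ha0, hb0q]
    field_simp
    ring_nf
    all_goals field_simp
    all_goals ring

end BPW
end
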